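/- Let G be a dense subgroup of a topological group H, and let d be a right-invariant metric on G compatible with the subspace topology. Then there exists a unique continuous map D : H × H → ℝ extending d, and D is a right-invariant metric on H compatible with the topology of H. -/

import Mathlib

open Filter Topology
open scoped Uniformity

/-- A right-invariant compatible metric on a dense subgroup `G` of a topological group
`H` extends uniquely to a continuous map `D : H × H → ℝ`, which is a right-invariant
compatible metric on `H`. -/
theorem stmt7 {H : Type*} [Group H] [TopologicalSpace H] [IsTopologicalGroup H] [T2Space H]
    (G : Subgroup H) (hG : Dense (G : Set H)) (d : H → H → ℝ)
    (hsymm : ∀ x ∈ G, ∀ y ∈ G, d x y = d y x)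
    (hpos : ∀ x ∈ G, ∀ y ∈ G, 0 ≤ d x y)
    (heq : ∀ x ∈ G, ∀ y ∈ G, (d x y = 0 ↔ x = y))
    (htri : ∀ x ∈ G, ∀ y ∈ G, ∀ z ∈ G, d x z ≤ d x y + d y z)
    (hinv : ∀ x ∈ G, ∀ y ∈ G, ∀ g ∈ G, d (x * g) (y * g) = d x y)
    (hcompat : ∀ x ∈ (G : Set H), nhdsWithin x (G : Set H)
      = ⨅ ε ∈ Set.Ioi (0 : ℝ), Filter.principal {y ∈ (G : Set H) | d x y < ε}) :
    ∃ D : H → H → ℝ,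
      Continuous (fun p : H × H => D p.1 p.2) ∧
      (∀ x ∈ G, ∀ y ∈ G, D x y = d x y) ∧
      (∀ D' : H → H → ℝ, Continuous (fun p : H × H => D' p.1 p.2) →
        (∀ x ∈ G, ∀ y ∈ G, D' x y = d x y) → D' = D) ∧
      (∀ x y, D x y = D y x) ∧ (∀ x y, 0 ≤ D x y) ∧
      (∀ x y, D x y = 0 ↔ x = y) ∧ (∀ x y z, D x z ≤ D x y + D y z) ∧
      (∀ x y g : H, D (x * g) (y * g) = D x y) ∧
      (∀ x : H, 𝓝 x = ⨅ ε ∈ Set.Ioi (0 : ℝ), Filter.principal {y | D x y < ε}) := by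
  letI : UniformSpace H := IsTopologicalGroup.rightUniformSpace H
  -- d is determined by its values at 1 via right invariance
  have hd1 : ∀ a ∈ G, ∀ b ∈ G, d a b = d 1 (b * a⁻¹) := by
    intro a ha b hb
    have := hinv 1 G.one_mem (b * a⁻¹) (G.mul_mem hb (G.inv_mem ha)) a ha
    simpa using this
  -- small d-balls at 1 come from neighborhoods of 1 in H
  have hkey : ∀ ε : ℝ, 0 < ε → ∃ V ∈ 𝓝 (1 : H), ∀ y ∈ V, y ∈ G → d 1 y < ε := by
    intro ε hε
    have h1 : {y ∈ (G : Set H) | d 1 y < ε} ∈ 𝓝[(G : Set H)] (1 : H) := by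
      rw [hcompat 1 G.one_mem]
      exact mem_iInf_of_mem ε (mem_iInf_of_mem hε (mem_principal_self _))
    rw [mem_nhdsWithin] at h1
    obtain ⟨U, hUopen, hU1, hU⟩ := h1
    exact ⟨U, hUopen.mem_nhds hU1, fun y hy hyG => (hU ⟨hy, hyG⟩).2⟩
  -- quadrilateral inequality
  have hquad : ∀ a ∈ G, ∀ b ∈ G, ∀ a' ∈ G, ∀ b' ∈ G,
      |d a b - d a' b'| ≤ d a a' + d b b' := by
    intro a ha b hb a' ha' b' hb'
    have h1 := htri a ha a' ha' b hb
    have h2 := htri a' ha' b' hb' b hb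
    have h3 := htri a' ha' a ha b' hb'
    have h4 := htri a ha b hb b' hb'
    have s1 := hsymm b' hb' b hb
    have s2 := hsymm a' ha' a ha
    exact abs_sub_le_iff.mpr ⟨by linarith, by linarith⟩
  -- the setting for uniform extension
  set f : ↥G × ↥G → ℝ := fun p => d p.1 p.2 with hf
  set e : ↥G × ↥G → H × H := fun p => ((p.1 : H), (p.2 : H)) with he
  have h_e : IsUniformInducing e :=
    isUniformEmbedding_subtype_val.isUniformInducing.prod
      isUniformEmbedding_subtype_val.isUniformInducing
  have h_dense : DenseRange e := hG.denseRange_val.prodMap hG.denseRange_val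
  have h_f : UniformContinuous f := by
    rw [UniformContinuous, Metric.uniformity_basis_dist.tendsto_right_iff]
    intro ε hε
    obtain ⟨V, hV, hVd⟩ := hkey (ε / 2) (by linarith)
    have hVmem : {q : ↥G × ↥G | ((q.2 : H) / (q.1 : H)) ∈ V} ∈ 𝓤 (↥G) := by
      have h2 : (fun p : H × H => p.2 / p.1) ⁻¹' V ∈ 𝓤 H := by
        have h3 : (fun p : H × H => p.2 / p.1) ⁻¹' V ∈ comap (fun p : H × H => p.2 * p.1⁻¹) (𝓝 1) := by
          simpa only [div_eq_mul_inv] using preimage_mem_comap (m := fun p : H × H => p.2 * p.1⁻¹) hV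
        exact h3
      rw [uniformity_subtype]
      exact preimage_mem_comap h2
    have hmem : {x : (↥G × ↥G) × (↥G × ↥G) |
        ((x.2.1 : H) / (x.1.1 : H)) ∈ V ∧ ((x.2.2 : H) / (x.1.2 : H)) ∈ V}
        ∈ 𝓤 (↥G × ↥G) := by
      rw [uniformity_prod]
      exact inter_mem_inf (preimage_mem_comap hVmem) (preimage_mem_comap hVmem)
    filter_upwards [hmem]
    rintro ⟨⟨a, b⟩, ⟨a', b'⟩⟩ ⟨hxa, hxb⟩
    have haa' : d a a' < ε / 2 := by
      rw [hd1 a a.2 a' a'.2]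
      have hmemG : ((a' : H) / (a : H)) ∈ G := G.div_mem a'.2 a.2
      have := hVd _ hxa hmemG
      rwa [div_eq_mul_inv] at this
    have hbb' : d b b' < ε / 2 := by
      rw [hd1 b b.2 b' b'.2]
      have hmemG : ((b' : H) / (b : H)) ∈ G := G.div_mem b'.2 b.2
      have := hVd _ hxb hmemG
      rwa [div_eq_mul_inv] at this
    have hq := hquad a a.2 b b.2 a' a'.2 b' b'.2
    have : dist (f (a, b)) (f (a', b')) = |d a b - d a' b'| := Real.dist_eq _ _
    simp only [Set.mem_setOf_eq]
    rw [this]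
    linarith [abs_sub_le_iff.mp (le_refl |d (a:H) (b:H) - d (a':H) (b':H)|)]
  -- the extension
  set D0 : H × H → ℝ := (h_e.isDenseInducing h_dense).extend f with hD0
  have hcont : Continuous D0 :=
    (uniformContinuous_uniformly_extend h_e h_dense h_f).continuous
  have hDd : ∀ x ∈ G, ∀ y ∈ G, D0 (x, y) = d x y := by
    intro x hx y hy
    exact uniformly_extend_of_ind h_e h_dense h_f (⟨x, hx⟩, ⟨y, hy⟩)
  have hGG : Dense ((G : Set H) ×ˢ (G : Set H)) := hG.prod hG
  have hGGG : Dense ((G : Set H) ×ˢ ((G : Set H) ×ˢ (G : Set H))) := hG.prod (hG.prod hG)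
  -- symmetry
  have hDsymm : ∀ x y : H, D0 (x, y) = D0 (y, x) := by
    have hcl : IsClosed {p : H × H | D0 p = D0 p.swap} :=
      isClosed_eq hcont (hcont.comp continuous_swap)
    have hsub : (G : Set H) ×ˢ (G : Set H) ⊆ {p : H × H | D0 p = D0 p.swap} := by
      rintro ⟨x, y⟩ ⟨hx, hy⟩
      show D0 (x, y) = D0 (y, x)
      rw [hDd x hx y hy, hDd y hy x hx, hsymm x hx y hy]
    intro x y
    exact hcl.closure_subset_iff.mpr hsub (hGG (x, y))
  -- nonnegativity
  have hDpos : ∀ x y : H, 0 ≤ D0 (x, y) := by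
    have hcl : IsClosed {p : H × H | 0 ≤ D0 p} := isClosed_le continuous_const hcont
    have hsub : (G : Set H) ×ˢ (G : Set H) ⊆ {p : H × H | 0 ≤ D0 p} := by
      rintro ⟨x, y⟩ ⟨hx, hy⟩
      show 0 ≤ D0 (x, y)
      rw [hDd x hx y hy]
      exact hpos x hx y hy
    intro x y
    exact hcl.closure_subset_iff.mpr hsub (hGG (x, y))
  -- triangle inequality
  have hDtri : ∀ x y z : H, D0 (x, z) ≤ D0 (x, y) + D0 (y, z) := by
    have hc1 : Continuous fun q : H × H × H => D0 (q.1, q.2.2) :=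
      hcont.comp (continuous_fst.prodMk (continuous_snd.comp continuous_snd))
    have hc2 : Continuous fun q : H × H × H => D0 (q.1, q.2.1) + D0 (q.2.1, q.2.2) :=
      (hcont.comp (continuous_fst.prodMk (continuous_fst.comp continuous_snd))).add
        (hcont.comp ((continuous_fst.comp continuous_snd).prodMk
          (continuous_snd.comp continuous_snd)))
    have hcl := isClosed_le hc1 hc2
    have hsub : (G : Set H) ×ˢ ((G : Set H) ×ˢ (G : Set H)) ⊆
        {q : H × H × H | D0 (q.1, q.2.2) ≤ D0 (q.1, q.2.1) + D0 (q.2.1, q.2.2)} := by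
      rintro ⟨x, y, z⟩ ⟨hx, hy, hz⟩
      show D0 (x, z) ≤ D0 (x, y) + D0 (y, z)
      rw [hDd x hx z hz, hDd x hx y hy, hDd y hy z hz]
      exact htri x hx y hy z hz
    intro x y z
    exact hcl.closure_subset_iff.mpr hsub (hGGG (x, y, z))
  -- right invariance
  have hDinv : ∀ x y g : H, D0 (x * g, y * g) = D0 (x, y) := by
    have hc1 : Continuous fun q : H × H × H => D0 (q.1 * q.2.2, q.2.1 * q.2.2) :=
      hcont.comp ((continuous_fst.mul (continuous_snd.comp continuous_snd)).prodMk
        ((continuous_fst.comp continuous_snd).mul (continuous_snd.comp continuous_snd)))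
    have hc2 : Continuous fun q : H × H × H => D0 (q.1, q.2.1) :=
      hcont.comp (continuous_fst.prodMk (continuous_fst.comp continuous_snd))
    have hcl := isClosed_eq hc1 hc2
    have hsub : (G : Set H) ×ˢ ((G : Set H) ×ˢ (G : Set H)) ⊆
        {q : H × H × H | D0 (q.1 * q.2.2, q.2.1 * q.2.2) = D0 (q.1, q.2.1)} := by
      rintro ⟨x, y, g⟩ ⟨hx, hy, hg⟩
      show D0 (x * g, y * g) = D0 (x, y)
      rw [hDd _ (G.mul_mem hx hg) _ (G.mul_mem hy hg), hDd x hx y hy]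
      exact hinv x hx y hy g hg
    intro x y g
    exact hcl.closure_subset_iff.mpr hsub (hGGG (x, y, g))
  -- vanishing on the diagonal
  have hDzero : ∀ x : H, D0 (x, x) = 0 := by
    have hcl : IsClosed {x : H | D0 (x, x) = 0} :=
      isClosed_eq (hcont.comp (continuous_id.prodMk continuous_id)) continuous_const
    have hsub : (G : Set H) ⊆ {x : H | D0 (x, x) = 0} := by
      intro x hx
      show D0 (x, x) = 0
      rw [hDd x hx x hx]
      exact (heq x hx x hx).mpr rfl
    intro x
    exact hcl.closure_subset_iff.mpr hsub (hG x)
  -- auxiliary continuity facts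
  have hcont1 : ∀ x : H, Continuous fun y : H => D0 (x, y) := fun x =>
    hcont.comp (continuous_const.prodMk continuous_id)
  have hball_open : ∀ (x : H) (ε : ℝ), IsOpen {y : H | D0 (x, y) < ε} := fun x ε =>
    isOpen_lt (hcont1 x) continuous_const
  -- directedness helper
  have hdir : ∀ S : ℝ → Set H, (∀ ε₁ ε₂ : ℝ, ε₁ ≤ ε₂ → S ε₁ ⊆ S ε₂) →
      DirectedOn ((fun ε => 𝓟 (S ε)) ⁻¹'o (· ≥ ·)) (Set.Ioi (0 : ℝ)) := by
    intro S hS ε₁ hε₁ ε₂ hε₂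
    exact ⟨min ε₁ ε₂, show (0:ℝ) < min ε₁ ε₂ from lt_min hε₁ hε₂, principal_mono.2 (hS _ _ (min_le_left _ _)),
      principal_mono.2 (hS _ _ (min_le_right _ _))⟩
  -- every neighborhood of 1 contains a D-ball
  have key1 : ∀ W ∈ 𝓝 (1 : H), ∃ ε > (0 : ℝ), {y : H | D0 (1, y) < ε} ⊆ W := by
    intro W hW
    obtain ⟨C, ⟨hCmem, hCclosed⟩, hCW⟩ := (closed_nhds_basis (1 : H)).mem_iff.mp hW
    have hC' : C ∈ 𝓝[(G : Set H)] (1 : H) := nhdsWithin_le_nhds hCmem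
    rw [hcompat 1 G.one_mem] at hC'
    rw [mem_biInf_of_directed
      (hdir (fun ε => {y ∈ (G : Set H) | d 1 y < ε})
        (fun ε₁ ε₂ h y hy => ⟨hy.1, lt_of_lt_of_le hy.2 h⟩))
      ⟨1, by norm_num⟩] at hC'
    obtain ⟨ε, hε, hball⟩ := hC'
    rw [mem_principal] at hball
    refine ⟨ε, hε, fun y hy => hCW ?_⟩
    have hyc : y ∈ closure {z ∈ (G : Set H) | d 1 z < ε} := by
      rw [mem_closure_iff]
      intro O hO hyO
      obtain ⟨g, hgG, hgO⟩ := hG.exists_mem_open (hO.inter (hball_open 1 ε)) ⟨y, hyO, hy⟩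
      exact ⟨g, hgO.1, hgG, by rw [← hDd 1 G.one_mem g hgG]; exact hgO.2⟩
    exact hCclosed.closure_eq ▸ closure_mono hball hyc
  -- compatibility of D with the topology
  have hnhds : ∀ x : H, 𝓝 x = ⨅ ε ∈ Set.Ioi (0 : ℝ), 𝓟 {y : H | D0 (x, y) < ε} := by
    intro x
    apply le_antisymm
    · refine le_iInf₂ fun ε hε => le_principal_iff.2 ?_
      refine (hball_open x ε).mem_nhds ?_
      show D0 (x, x) < ε
      rw [hDzero x]; exact hε
    · rw [Filter.le_def]
      intro W hW
      rw [mem_biInf_of_directed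
        (hdir (fun ε => {y : H | D0 (x, y) < ε})
          (fun ε₁ ε₂ h y hy => lt_of_lt_of_le hy h)) ⟨1, by norm_num⟩]
      have hW1 : (fun z : H => z * x) ⁻¹' W ∈ 𝓝 (1 : H) := by
        have ht : Filter.Tendsto (fun z : H => z * x) (𝓝 1) (𝓝 x) := by
          simpa using (continuous_mul_right x).tendsto
            (1 : H)
        exact ht hW
      obtain ⟨ε, hε, hsub⟩ := key1 _ hW1
      refine ⟨ε, hε, fun y hy => ?_⟩
      have h1 : D0 (1, y * x⁻¹) = D0 (x, y) := by
        have := hDinv 1 (y * x⁻¹) x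
        simpa using this.symm
      have h2 : y * x⁻¹ ∈ (fun z : H => z * x) ⁻¹' W := by
        refine hsub ?_
        show D0 (1, y * x⁻¹) < ε
        rw [h1]; exact hy
      simpa using h2
  -- separation
  have hDeq : ∀ x y : H, D0 (x, y) = 0 ↔ x = y := by
    intro x y
    constructor
    · intro h0
      by_contra hne
      have hy : {y}ᶜ ∈ 𝓝 x := isOpen_compl_singleton.mem_nhds hne
      rw [hnhds x, mem_biInf_of_directed
        (hdir (fun ε => {z : H | D0 (x, z) < ε})
          (fun ε₁ ε₂ h z hz => lt_of_lt_of_le hz h)) ⟨1, by norm_num⟩] at hy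
      obtain ⟨ε, hε, hsub⟩ := hy
      have : y ∈ {y}ᶜ := hsub (show D0 (x, y) < ε by rw [h0]; exact hε)
      exact this rfl
    · rintro rfl; exact hDzero x
  -- conclude
  refine ⟨fun x y => D0 (x, y), hcont, hDd, ?_, hDsymm, hDpos, hDeq, hDtri, hDinv, hnhds⟩
  intro D' hD' hD'd
  have heqon : Set.EqOn (fun p : H × H => D' p.1 p.2) D0 (Set.range e) := by
    rintro _ ⟨⟨a, b⟩, rfl⟩
    show D' (a : H) (b : H) = D0 ((a : H), (b : H))
    rw [hD'd a a.2 b b.2, hDd a a.2 b b.2]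
  have hfin := Continuous.ext_on h_dense hD' hcont heqon
  funext x y
  exact congrFun hfin (x, y)
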